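/- Let p be a prime and let G be a normal subgroup of a finite group Ḡ whose index [Ḡ:G] is a power of p. If a p-subgroup P ≤ G is p-centric in G and F_p(G)-radical, then there exists a p-subgroup P̄ ≤ Ḡ which is p-centric in Ḡ and F_p(Ḡ)-radical and satisfies P̄ ∩ G = P. -/

import Mathlib

/-- A subgroup `P ≤ G` is `p`-centric in `G` if every element of `p`-power order in the
centralizer `C_G(P)` lies in `P`. -/
def IsPCentric (p : ℕ) {G : Type*} [Group G] (P : Subgroup G) : Prop :=
  ∀ g ∈ Subgroup.centralizer (P : Set G), (∃ n : ℕ, g ^ p ^ n = 1) → g ∈ P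

/-- The subgroup `P ⬝ C_G(P)` of the normalizer `N_G(P)`, i.e. the kernel of
`N_G(P) → Out_G(P)`. -/
def outKer {G : Type*} [Group G] (P : Subgroup G) : Subgroup (Subgroup.normalizer (P : Set G)) :=
  (P ⊔ Subgroup.centralizer (P : Set G)).subgroupOf (Subgroup.normalizer (P : Set G))

instance outKer_normal {G : Type*} [Group G] (P : Subgroup G) : (outKer P).Normal := by
  constructor
  intro n hn g
  rw [outKer, Subgroup.mem_subgroupOf] at hn ⊢
  have key : ∀ x : G, x ∈ (Subgroup.normalizer (P : Set G)) →
      ∀ y ∈ P ⊔ Subgroup.centralizer (P : Set G),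
        x * y * x⁻¹ ∈ P ⊔ Subgroup.centralizer (P : Set G) := by
    intro x hx y hy
    have hPle : P.map (MulAut.conj x).toMonoidHom
        ≤ P ⊔ Subgroup.centralizer (P : Set G) := by
      rintro _ ⟨y, hyP, rfl⟩
      exact Subgroup.mem_sup_left
        (by simpa using (Subgroup.mem_normalizer_iff.mp hx y).mp hyP)
    have hCle : (Subgroup.centralizer (P : Set G)).map (MulAut.conj x).toMonoidHom
        ≤ P ⊔ Subgroup.centralizer (P : Set G) := by
      rintro _ ⟨y, hyC, rfl⟩
      have hyC' : ∀ h ∈ P, h * y = y * h := fun h hh =>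
        Subgroup.mem_centralizer_iff.mp hyC h hh
      refine Subgroup.mem_sup_right (Subgroup.mem_centralizer_iff.mpr ?_)
      intro h hh
      have hh' : x⁻¹ * h * x ∈ P := by
        refine (Subgroup.mem_normalizer_iff.mp hx (x⁻¹ * h * x)).mpr ?_
        have : x * (x⁻¹ * h * x) * x⁻¹ = h := by group
        rw [this]
        exact hh
      have hcomm := hyC' _ hh'
      have : (MulAut.conj x).toMonoidHom y = x * y * x⁻¹ := by
        simp [MulAut.conj_apply]
      rw [this]
      calc h * (x * y * x⁻¹) = x * ((x⁻¹ * h * x) * y) * x⁻¹ := by group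
        _ = x * (y * (x⁻¹ * h * x)) * x⁻¹ := by rw [hcomm]
        _ = x * y * x⁻¹ * h := by group
    have hmap : (P ⊔ Subgroup.centralizer (P : Set G)).map (MulAut.conj x).toMonoidHom
        ≤ P ⊔ Subgroup.centralizer (P : Set G) := by
      rw [Subgroup.map_sup]
      exact sup_le hPle hCle
    have := hmap (Subgroup.mem_map_of_mem _ hy)
    simpa using this
  have := key (g : G) g.2 (n : G) hn
  simpa [mul_assoc] using this

/-- `Out_G(P) = N_G(P) / (P ⬝ C_G(P))`. -/
def OutG {G : Type*} [Group G] (P : Subgroup G) : Type _ :=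
  (Subgroup.normalizer (P : Set G)) ⧸ outKer P

instance {G : Type*} [Group G] (P : Subgroup G) : Group (OutG P) :=
  inferInstanceAs (Group ((Subgroup.normalizer (P : Set G)) ⧸ outKer P))

/-- A subgroup `P ≤ G` is `F_p(G)`-radical if `Out_G(P) = N_G(P)/(P ⬝ C_G(P))` has no
nontrivial normal `p`-subgroup. -/
def IsFpRadical (p : ℕ) {G : Type*} [Group G] (P : Subgroup G) : Prop :=
  ∀ K : Subgroup (OutG P), K.Normal → IsPGroup p K → K = ⊥

open Subgroup

private lemma isPGroup_of_forall {p : ℕ} {G : Type*} [Group G] {H : Subgroup G}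
    (h : ∀ x ∈ H, ∃ n : ℕ, x ^ p ^ n = 1) : IsPGroup p H := by
  rintro ⟨x, hx⟩
  obtain ⟨n, hn⟩ := h x hx
  exact ⟨n, Subtype.ext (by simpa using hn)⟩

private lemma forall_of_isPGroup {p : ℕ} {G : Type*} [Group G] {H : Subgroup G}
    (h : IsPGroup p H) : ∀ x ∈ H, ∃ n : ℕ, x ^ p ^ n = 1 := by
  intro x hx
  obtain ⟨n, hn⟩ := h ⟨x, hx⟩
  exact ⟨n, by simpa [Subtype.ext_iff] using hn⟩

private lemma isPGroup_quot {p : ℕ} {G : Type*} [Group G] {H : Subgroup G} [H.Normal]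
    (h : ∀ x : G, ∃ n : ℕ, x ^ p ^ n ∈ H) : IsPGroup p (G ⧸ H) := by
  intro g
  induction g using QuotientGroup.induction_on with
  | _ x =>
    obtain ⟨n, hn⟩ := h x
    refine ⟨n, ?_⟩
    rw [← QuotientGroup.mk_pow]
    exact (QuotientGroup.eq_one_iff _).mpr hn

private lemma isPGroup_zpowers {p n : ℕ} {G : Type*} [Group G] {x : G} (h : x ^ p ^ n = 1) :
    IsPGroup p (Subgroup.zpowers x) := by
  apply isPGroup_of_forall
  intro y hy
  obtain ⟨m, rfl⟩ := Subgroup.mem_zpowers_iff.mp hy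
  exact ⟨n, by rw [← zpow_natCast, ← zpow_mul, mul_comm, zpow_mul, zpow_natCast, h, one_zpow]⟩

section Main

variable {p : ℕ} {Gbar : Type*} [Group Gbar] (G P : Subgroup Gbar)

private abbrev CC : Subgroup Gbar := Subgroup.centralizer (P : Set Gbar)

private abbrev DD : Subgroup Gbar := P ⊔ (CC P ⊓ G)

private lemma hCN : CC P ≤ (Subgroup.normalizer (P : Set Gbar)) := by
  intro c hc
  rw [Subgroup.mem_normalizer_iff]
  intro h
  constructor
  · intro hh
    have := Subgroup.mem_centralizer_iff.mp hc h hh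
    have : c * h * c⁻¹ = h := by rw [← this]; group
    rw [this]; exact hh
  · intro hh
    have h2 := Subgroup.mem_centralizer_iff.mp hc _ hh
    have h3 : c * h = c * (c * h * c⁻¹) := by
      calc c * h = (c * h * c⁻¹) * c := by group
        _ = c * (c * h * c⁻¹) := h2
    rw [mul_left_cancel h3]; exact hh

private lemma hDN : DD G P ≤ (Subgroup.normalizer (P : Set Gbar)) :=
  sup_le Subgroup.le_normalizer (inf_le_left.trans (hCN P))

private lemma hDG (hPG : P ≤ G) : DD G P ≤ G := sup_le hPG inf_le_right

private lemma hCconj : ∀ g ∈ (Subgroup.normalizer (P : Set Gbar)), ∀ c ∈ CC P, g * c * g⁻¹ ∈ CC P := by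
  intro g hg c hc
  rw [Subgroup.mem_centralizer_iff]
  intro h hh
  have hh' : g⁻¹ * h * g ∈ P := by
    refine (Subgroup.mem_normalizer_iff.mp hg (g⁻¹ * h * g)).mpr ?_
    have : g * (g⁻¹ * h * g) * g⁻¹ = h := by group
    rw [this]; exact hh
  have hcomm := Subgroup.mem_centralizer_iff.mp hc _ hh'
  calc h * (g * c * g⁻¹) = g * ((g⁻¹ * h * g) * c) * g⁻¹ := by group
    _ = g * (c * (g⁻¹ * h * g)) * g⁻¹ := by rw [hcomm]
    _ = g * c * g⁻¹ * h := by group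

private lemma hPconj : ∀ g ∈ (Subgroup.normalizer (P : Set Gbar)), ∀ x ∈ P, g * x * g⁻¹ ∈ P := by
  intro g hg x hx
  exact (Subgroup.mem_normalizer_iff.mp hg x).mp hx

private lemma hDconj (hG : G.Normal) :
    ∀ g ∈ (Subgroup.normalizer (P : Set Gbar)), ∀ x ∈ DD G P, g * x * g⁻¹ ∈ DD G P := by
  intro g hg x hx
  have key : P ⊔ (CC P ⊓ G) ≤ ((P ⊔ (CC P ⊓ G)).comap (MulAut.conj g).toMonoidHom) := by
    refine sup_le ?_ ?_
    · intro y hy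
      simp only [Subgroup.mem_comap, MulEquiv.coe_toMonoidHom, MulAut.conj_apply]
      exact Subgroup.mem_sup_left (by simpa using hPconj P g hg y hy)
    · rintro y ⟨hyC, hyG⟩
      simp only [Subgroup.mem_comap, MulEquiv.coe_toMonoidHom, MulAut.conj_apply]
      refine Subgroup.mem_sup_right ⟨by simpa using hCconj P g hg y hyC, ?_⟩
      simpa using hG.conj_mem y hyG g
  have := key hx
  simpa using this

/-- The product set `P * (C ⊓ G)` as a subgroup. -/
private def Emul : Subgroup Gbar where
  carrier := {x | ∃ u ∈ P, ∃ c ∈ CC P ⊓ G, u * c = x}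
  one_mem' := ⟨1, one_mem _, 1, one_mem _, one_mul 1⟩
  mul_mem' := by
    rintro a b ⟨u1, hu1, c1, hc1, rfl⟩ ⟨u2, hu2, c2, hc2, rfl⟩
    refine ⟨u1 * u2, mul_mem hu1 hu2, c1 * c2, mul_mem hc1 hc2, ?_⟩
    have h1 : u2 * c1 = c1 * u2 := Subgroup.mem_centralizer_iff.mp hc1.1 u2 hu2
    calc u1 * u2 * (c1 * c2) = u1 * (u2 * c1) * c2 := by group
      _ = u1 * (c1 * u2) * c2 := by rw [h1]
      _ = u1 * c1 * (u2 * c2) := by group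
  inv_mem' := by
    rintro a ⟨u, hu, c, hc, rfl⟩
    refine ⟨u⁻¹, inv_mem hu, c⁻¹, inv_mem hc, ?_⟩
    have h1 : u * c = c * u := Subgroup.mem_centralizer_iff.mp hc.1 u hu
    rw [mul_inv_rev]
    have : Commute u c := h1
    exact (this.inv_inv).eq.symm ▸ (this.inv_inv).eq ▸ rfl

private lemma mem_DD {x : Gbar} (hx : x ∈ DD G P) :
    ∃ u ∈ P, ∃ c ∈ CC P ⊓ G, u * c = x := by
  have : DD G P ≤ Emul G P := by
    refine sup_le ?_ ?_
    · intro y hy; exact ⟨y, hy, 1, one_mem _, mul_one y⟩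
    · intro y hy; exact ⟨1, one_mem _, y, hy, one_mul y⟩
  exact this hx

private lemma centric' {p : ℕ} (hPG : P ≤ G) (hc : IsPCentric p (P.subgroupOf G)) :
    ∀ c, c ∈ CC P → c ∈ G → (∃ n : ℕ, c ^ p ^ n = 1) → c ∈ P := by
  intro c hcC hcG ⟨n, hn⟩
  have hmem : (⟨c, hcG⟩ : G) ∈ Subgroup.centralizer ((P.subgroupOf G : Subgroup G) : Set G) := by
    rw [Subgroup.mem_centralizer_iff]
    rintro ⟨z, hzG⟩ hz
    rw [SetLike.mem_coe, Subgroup.mem_subgroupOf] at hz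
    exact Subtype.ext (Subgroup.mem_centralizer_iff.mp hcC z hz)
  have hpow : ∃ m : ℕ, (⟨c, hcG⟩ : G) ^ p ^ m = 1 := ⟨n, Subtype.ext (by simpa using hn)⟩
  have := hc _ hmem hpow
  rwa [Subgroup.mem_subgroupOf] at this

private lemma p_elt_DD {p : ℕ} (hPG : P ≤ G) (hP : IsPGroup p P)
    (hc : IsPCentric p (P.subgroupOf G)) {x : Gbar} (hx : x ∈ DD G P)
    (hxp : ∃ n : ℕ, x ^ p ^ n = 1) : x ∈ P := by
  obtain ⟨u, hu, c, hcmem, rfl⟩ := mem_DD G P hx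
  obtain ⟨a, ha⟩ := forall_of_isPGroup hP u hu
  obtain ⟨b, hb⟩ := hxp
  have hcomm : Commute u c := Subgroup.mem_centralizer_iff.mp hcmem.1 u hu
  have hcpow : c ^ (p ^ (a + b)) = 1 := by
    have h1 : (u * c) ^ p ^ (a + b) = u ^ p ^ (a + b) * c ^ p ^ (a + b) := hcomm.mul_pow _
    have h2 : (u * c) ^ p ^ (a + b) = 1 := by
      rw [pow_add, mul_comm, pow_mul, hb, one_pow]
    have h3 : u ^ p ^ (a + b) = 1 := by
      rw [pow_add, pow_mul, ha, one_pow]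
    rw [h2, h3, one_mul] at h1
    exact h1.symm
  have hcP : c ∈ P := centric' G P hPG hc c hcmem.1 hcmem.2 ⟨a + b, hcpow⟩
  exact mul_mem hu hcP

end Main

section Main2

variable {p : ℕ} {Gbar : Type*} [Group Gbar] (G P : Subgroup Gbar)

private abbrev Dn : Subgroup ↥(Subgroup.normalizer (P : Set Gbar)) := (DD G P).subgroupOf (Subgroup.normalizer (P : Set Gbar))

private lemma Dn_normal (hG : G.Normal) : (Dn G P).Normal := by
  constructor
  intro n hn g
  rw [Subgroup.mem_subgroupOf] at hn ⊢
  simpa [mul_assoc] using hDconj G P hG (g : Gbar) g.2 _ hn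

private lemma Cn_normal : (((CC P).subgroupOf (Subgroup.normalizer (P : Set Gbar)))).Normal := by
  constructor
  intro n hn g
  rw [Subgroup.mem_subgroupOf] at hn ⊢
  simpa [mul_assoc] using hCconj P (g : Gbar) g.2 _ hn

private lemma normalizer_transfer (hPG : P ≤ G) (g : ↥G) :
    g ∈ (Subgroup.normalizer ((P.subgroupOf G : Subgroup G) : Set G)) ↔ (g : Gbar) ∈ (Subgroup.normalizer (P : Set Gbar)) := by
  rw [Subgroup.mem_normalizer_iff, Subgroup.mem_normalizer_iff]
  constructor
  · intro h x
    constructor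
    · intro hx
      have := (h ⟨x, hPG hx⟩).mp (by rwa [Subgroup.mem_subgroupOf])
      rw [Subgroup.mem_subgroupOf] at this
      exact this
    · intro hx
      have hxG : x ∈ G := by
        have h1 : (g : Gbar) * x * (g : Gbar)⁻¹ ∈ G := hPG hx
        have h2 : x = (g:Gbar)⁻¹ * ((g : Gbar) * x * (g : Gbar)⁻¹) * (g:Gbar) := by group
        rw [h2]
        exact mul_mem (mul_mem (inv_mem g.2) h1) g.2
      have := (h ⟨x, hxG⟩).mpr (by rwa [Subgroup.mem_subgroupOf])
      rw [Subgroup.mem_subgroupOf] at this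
      exact this
  · intro h x
    rw [Subgroup.mem_subgroupOf, Subgroup.mem_subgroupOf]
    exact h (x : Gbar)

private lemma map_outKer_eq (hPG : P ≤ G) :
    Subgroup.map G.subtype
      ((P.subgroupOf G) ⊔ Subgroup.centralizer ((P.subgroupOf G : Subgroup G) : Set G))
      = DD G P := by
  rw [Subgroup.map_sup]
  have h1 : Subgroup.map G.subtype (P.subgroupOf G) = P := by
    rw [Subgroup.subgroupOf_map_subtype, inf_of_le_left hPG]
  have h2 : Subgroup.map G.subtype
      (Subgroup.centralizer ((P.subgroupOf G : Subgroup G) : Set G)) = CC P ⊓ G := by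
    apply le_antisymm
    · rintro _ ⟨c, hcC, rfl⟩
      refine Subgroup.mem_inf.mpr ⟨Subgroup.mem_centralizer_iff.mpr ?_, c.2⟩
      intro z hz
      have := Subgroup.mem_centralizer_iff.mp hcC ⟨z, hPG hz⟩
        (by rw [SetLike.mem_coe, Subgroup.mem_subgroupOf]; exact hz)
      exact Subtype.ext_iff.mp this
    · rintro c ⟨hcC, hcG⟩
      refine ⟨⟨c, hcG⟩, ?_, rfl⟩
      rw [SetLike.mem_coe, Subgroup.mem_centralizer_iff]
      rintro ⟨z, hzG⟩ hz
      rw [SetLike.mem_coe, Subgroup.mem_subgroupOf] at hz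
      exact Subtype.ext (Subgroup.mem_centralizer_iff.mp hcC z hz)
  rw [h1, h2]

private lemma mem_outKer_iff (hPG : P ≤ G) (y : ↥(Subgroup.normalizer ((P.subgroupOf G : Subgroup G) : Set G))) :
    y ∈ outKer (P.subgroupOf G) ↔ ((y : ↥G) : Gbar) ∈ DD G P := by
  rw [outKer, Subgroup.mem_subgroupOf, ← map_outKer_eq G P hPG]
  exact (Subgroup.mem_map_iff_mem (Subgroup.subtype_injective G)).symm

private lemma hGpow (hG : G.Normal) (hidx : ∃ k : ℕ, G.index = p ^ k) :
    ∀ g : Gbar, ∃ n : ℕ, g ^ p ^ n ∈ G := by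
  obtain ⟨k, hk⟩ := hidx
  have : IsPGroup p (Gbar ⧸ G) := IsPGroup.of_card (by rw [← Subgroup.index_eq_card, hk])
  intro g
  obtain ⟨n, hn⟩ := this (QuotientGroup.mk g)
  refine ⟨n, ?_⟩
  rw [← QuotientGroup.mk_pow] at hn
  exact (QuotientGroup.eq_one_iff _).mp hn

end Main2

section Main3

variable {p : ℕ} {Gbar : Type*} [Group Gbar] [Finite Gbar] (G P : Subgroup Gbar)

private lemma exists_Kb (hG : G.Normal) (hidx : ∃ k : ℕ, G.index = p ^ k)
    [hDnN : (Dn G P).Normal] :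
    ∃ Kb : Subgroup (↥(Subgroup.normalizer (P : Set Gbar)) ⧸ Dn G P), Kb.Normal ∧ IsPGroup p Kb ∧
      (((CC P).subgroupOf (Subgroup.normalizer (P : Set Gbar))).map (QuotientGroup.mk' (Dn G P)) ≤ Kb) ∧
      (∀ L : Subgroup (↥(Subgroup.normalizer (P : Set Gbar)) ⧸ Dn G P), L.Normal → IsPGroup p L → Kb ≤ L → L = Kb) := by
  haveI : Finite (Subgroup (↥(Subgroup.normalizer (P : Set Gbar)) ⧸ Dn G P)) :=
    Finite.of_injective _ SetLike.coe_injective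
  set imC := ((CC P).subgroupOf (Subgroup.normalizer (P : Set Gbar))).map (QuotientGroup.mk' (Dn G P)) with himC
  have himCnormal : imC.Normal :=
    (Cn_normal P).map _ (QuotientGroup.mk'_surjective _)
  have himCp : IsPGroup p imC := by
    apply isPGroup_of_forall
    rintro _ ⟨c, hcC, rfl⟩
    rw [SetLike.mem_coe, Subgroup.mem_subgroupOf] at hcC
    obtain ⟨n, hn⟩ := hGpow G hG hidx (c : Gbar)
    refine ⟨n, ?_⟩
    rw [← map_pow]
    apply (QuotientGroup.eq_one_iff _).mpr
    rw [Subgroup.mem_subgroupOf]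
    have hcoe : ((c ^ p ^ n : ↥(Subgroup.normalizer (P : Set Gbar))) : Gbar) = (c : Gbar) ^ p ^ n := by
      push_cast; rfl
    rw [hcoe]
    exact Subgroup.mem_sup_right ⟨pow_mem hcC _, hn⟩
  obtain ⟨Kb, hKbmem, hmax⟩ := Set.Finite.exists_maximalFor id
    {L : Subgroup (↥(Subgroup.normalizer (P : Set Gbar)) ⧸ Dn G P) | L.Normal ∧ IsPGroup p L ∧ imC ≤ L}
    (Set.toFinite _) ⟨imC, himCnormal, himCp, le_rfl⟩
  refine ⟨Kb, hKbmem.1, hKbmem.2.1, hKbmem.2.2, fun L hLn hLp hKL => ?_⟩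
  exact le_antisymm (hmax ⟨hLn, hLp, hKbmem.2.2.trans hKL⟩ hKL) hKL

private lemma Kb_inter (hG : G.Normal) (hPG : P ≤ G) (hr : IsFpRadical p (P.subgroupOf G))
    [hDnN : (Dn G P).Normal]
    (Kb : Subgroup (↥(Subgroup.normalizer (P : Set Gbar)) ⧸ Dn G P)) (hKbN : Kb.Normal) (hKbP : IsPGroup p Kb) :
    ∀ x : ↥(Subgroup.normalizer (P : Set Gbar)), QuotientGroup.mk' (Dn G P) x ∈ Kb → (x : Gbar) ∈ G →
      (x : Gbar) ∈ DD G P := by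
  intro x hx1 hx2
  -- the homomorphism ρ from N_G(P∩G) to N_Gbar(P)
  set NG := (Subgroup.normalizer ((P.subgroupOf G : Subgroup G) : Set G)) with hNG
  have hρmem : ∀ y : ↥NG, ((y : ↥G) : Gbar) ∈ (Subgroup.normalizer (P : Set Gbar)) := fun y =>
    (normalizer_transfer G P hPG (y : ↥G)).mp y.2
  set ρ : ↥NG →* ↥(Subgroup.normalizer (P : Set Gbar)) :=
    MonoidHom.codRestrict ((G.subtype).comp NG.subtype) (Subgroup.normalizer (P : Set Gbar)) hρmem with hρ
  set θ₀ := (QuotientGroup.mk' (Dn G P)).comp ρ with hθ₀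
  have hker : ∀ y : ↥NG, θ₀ y = 1 ↔ y ∈ outKer (P.subgroupOf G) := by
    intro y
    rw [mem_outKer_iff G P hPG]
    constructor
    · intro h
      have := (QuotientGroup.eq_one_iff _).mp h
      rwa [Subgroup.mem_subgroupOf] at this
    · intro h
      apply (QuotientGroup.eq_one_iff _).mpr
      rwa [Subgroup.mem_subgroupOf]
  set θ := QuotientGroup.lift (outKer (P.subgroupOf G)) θ₀
    (fun y hy => (hker y).mpr hy) with hθ
  have hθmk : ∀ y : ↥NG, θ (QuotientGroup.mk y) = θ₀ y := fun y => rfl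
  have hθinj : ∀ q, θ q = 1 → q = 1 := by
    intro q
    induction q using QuotientGroup.induction_on with
    | _ y =>
      intro h
      rw [hθmk] at h
      exact (QuotientGroup.eq_one_iff _).mpr ((hker y).mp h)
  -- the subgroup J = Kb ⊓ range θ and its preimage L
  set L := Subgroup.comap θ (Kb ⊓ θ.range) with hL
  have hLnormal : L.Normal := by
    constructor
    intro n hn g
    rw [hL, Subgroup.mem_comap] at hn ⊢
    rw [Subgroup.mem_inf] at hn ⊢
    rw [map_mul, map_mul, map_inv]
    have hgr : θ g ∈ θ.range := ⟨g, rfl⟩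
    exact ⟨hKbN.conj_mem _ hn.1 _, mul_mem (mul_mem hgr hn.2) (inv_mem hgr)⟩
  have hLp : IsPGroup p L := by
    apply isPGroup_of_forall
    intro q hq
    rw [hL, Subgroup.mem_comap, Subgroup.mem_inf] at hq
    obtain ⟨n, hn⟩ := forall_of_isPGroup hKbP (θ q) hq.1
    refine ⟨n, ?_⟩
    apply hθinj
    rw [map_pow]
    exact hn
  have hLbot := hr L hLnormal hLp
  -- now use it
  set y : ↥NG := ⟨⟨(x : Gbar), hx2⟩, (normalizer_transfer G P hPG _).mpr x.2⟩ with hy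
  have hρy : ρ y = x := Subtype.ext rfl
  have hθy : θ (QuotientGroup.mk y) = QuotientGroup.mk' (Dn G P) x := by
    rw [hθmk, hθ₀, MonoidHom.comp_apply, hρy]
  have hymem : QuotientGroup.mk y ∈ L := by
    rw [hL, Subgroup.mem_comap, Subgroup.mem_inf]
    exact ⟨by rw [hθy]; exact hx1, ⟨QuotientGroup.mk y, rfl⟩⟩
  replace hymem : (QuotientGroup.mk y : ↥NG ⧸ outKer (P.subgroupOf G)) = 1 := by
    rw [hLbot] at hymem; exact hymem
  have : QuotientGroup.mk' (Dn G P) x = 1 := by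
    rw [← hθy, hymem, map_one]
  have := (QuotientGroup.eq_one_iff _).mp this
  rwa [Subgroup.mem_subgroupOf] at this

end Main3

set_option maxHeartbeats 1000000 in
theorem stmt_17 (p : ℕ) (hp : p.Prime) {Gbar : Type*} [Group Gbar] [Finite Gbar]
    (G : Subgroup Gbar) (hG : G.Normal) (hidx : ∃ k : ℕ, G.index = p ^ k)
    (P : Subgroup Gbar) (hPG : P ≤ G) (hP : IsPGroup p P)
    (hc : IsPCentric p (P.subgroupOf G)) (hr : IsFpRadical p (P.subgroupOf G)) :
    ∃ Pbar : Subgroup Gbar, IsPGroup p Pbar ∧ IsPCentric p Pbar ∧ IsFpRadical p Pbar ∧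
      Pbar ⊓ G = P := by
  haveI : Fact p.Prime := ⟨hp⟩
  haveI hDnN : (Dn G P).Normal := Dn_normal G P hG
  obtain ⟨Kb, hKbN, hKbP, hKbC, hKbmax⟩ := exists_Kb G P hG hidx
  set N := (Subgroup.normalizer (P : Set Gbar)) with hN
  set π := QuotientGroup.mk' (Dn G P) with hπ
  set Kn := Kb.comap π with hKn
  have hDnKn : Dn G P ≤ Kn := by
    intro d hd
    rw [hKn, Subgroup.mem_comap]
    have h1 : π d = 1 := (QuotientGroup.eq_one_iff d).mpr hd
    rw [h1]; exact one_mem Kb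
  have hKnN : Kn.Normal := Subgroup.Normal.comap hKbN π
  have hCnKn : (CC P).subgroupOf N ≤ Kn := by
    intro c hc'
    rw [hKn, Subgroup.mem_comap]
    exact hKbC ⟨c, hc', rfl⟩
  have hPsubKn : P.subgroupOf N ≤ Kn := by
    intro x hx
    rw [Subgroup.mem_subgroupOf] at hx
    exact hDnKn (by rw [Subgroup.mem_subgroupOf]; exact Subgroup.mem_sup_left hx)
  -- the Sylow subgroup
  obtain ⟨S⟩ := (Sylow.nonempty : Nonempty (Sylow p ↥Kn))
  set Pn := (S : Subgroup ↥Kn).map Kn.subtype with hPnDef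
  set Pbar := Pn.map N.subtype with hPbarDef
  have hPbarN : Pbar ≤ N := Subgroup.map_subtype_le Pn
  have hPnKn : Pn ≤ Kn := Subgroup.map_subtype_le _
  -- the canonical lifting of Pbar-members
  have hPbar_lift : ∀ z (hz : z ∈ Pbar) (hzN : z ∈ N), (⟨z, hzN⟩ : ↥N) ∈ Pn := by
    rintro _ ⟨x1, hx1, rfl⟩ hzN
    exact (by exact hx1 : (⟨(x1 : Gbar), hzN⟩ : ↥N) ∈ Pn)
  have hPbar_liftS : ∀ z (hz : z ∈ Pbar) (hzN : z ∈ N) (hzK : (⟨z, hzN⟩ : ↥N) ∈ Kn),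
      (⟨⟨z, hzN⟩, hzK⟩ : ↥Kn) ∈ (S : Subgroup ↥Kn) := by
    intro z hz hzN hzK
    obtain ⟨x2, hx2, hx2e⟩ := hPbar_lift z hz hzN
    have : (⟨⟨z, hzN⟩, hzK⟩ : ↥Kn) = x2 := by
      apply Subtype.ext; exact hx2e.symm
    rw [this]; exact hx2
  -- P is contained in Pbar
  have hPD : P ≤ DD G P := le_sup_left
  haveI hPKnormal : (((P.subgroupOf N).subgroupOf Kn)).Normal :=
    Subgroup.Normal.subgroupOf Subgroup.normal_in_normalizer Kn
  have hPKp : IsPGroup p ((P.subgroupOf N).subgroupOf Kn) := by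
    apply isPGroup_of_forall
    intro x hx
    rw [Subgroup.mem_subgroupOf, Subgroup.mem_subgroupOf] at hx
    obtain ⟨n, hn⟩ := forall_of_isPGroup hP _ hx
    exact ⟨n, by apply Subtype.ext; apply Subtype.ext; push_cast; exact hn⟩
  have hPKS : (P.subgroupOf N).subgroupOf Kn ≤ (S : Subgroup ↥Kn) := by
    have hsup : IsPGroup p ((((P.subgroupOf N).subgroupOf Kn) ⊔ (S : Subgroup ↥Kn) : Subgroup ↥Kn)) :=
      IsPGroup.to_sup_of_normal_left hPKp S.isPGroup'
    have := S.is_maximal' hsup le_sup_right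
    rw [← this]; exact le_sup_left
  have hPle : P ≤ Pbar := by
    intro z hz
    have hzN : z ∈ N := Subgroup.le_normalizer hz
    have hzK : (⟨z, hzN⟩ : ↥N) ∈ Kn := hPsubKn (by rwa [Subgroup.mem_subgroupOf])
    have hmem : (⟨⟨z, hzN⟩, hzK⟩ : ↥Kn) ∈ (S : Subgroup ↥Kn) := by
      apply hPKS
      rw [Subgroup.mem_subgroupOf, Subgroup.mem_subgroupOf]
      exact hz
    exact ⟨⟨z, hzN⟩, ⟨⟨⟨z, hzN⟩, hzK⟩, hmem, rfl⟩, rfl⟩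
  -- Pbar is a p-group
  have hPbarP : IsPGroup p Pbar := (S.isPGroup'.map _).map _
  -- Pbar ∩ G = P
  have hPbarG : Pbar ⊓ G = P := by
    apply le_antisymm
    · intro z hz
      rw [Subgroup.mem_inf] at hz
      obtain ⟨hzP, hzG⟩ := hz
      have hzN : z ∈ N := hPbarN hzP
      have hzK : (⟨z, hzN⟩ : ↥N) ∈ Kn := hPnKn (hPbar_lift z hzP hzN)
      have hzD : z ∈ DD G P :=
        Kb_inter G P hG hPG hr Kb hKbN hKbP ⟨z, hzN⟩ (Subgroup.mem_comap.mp hzK) hzG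
      exact p_elt_DD G P hPG hP hc hzD (forall_of_isPGroup hPbarP z hzP)
    · intro z hz
      exact Subgroup.mem_inf.mpr ⟨hPle hz, hPG hz⟩
  -- Pbar is p-centric
  have hPbarC : IsPCentric p Pbar := by
    intro x hxC hxpow
    have hxCP : x ∈ CC P := by
      rw [Subgroup.mem_centralizer_iff]
      intro h hh
      exact Subgroup.mem_centralizer_iff.mp hxC h (hPle hh)
    have hxN : x ∈ N := hCN P hxCP
    have hxK : (⟨x, hxN⟩ : ↥N) ∈ Kn := hCnKn (by rwa [Subgroup.mem_subgroupOf])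
    set x2 : ↥Kn := ⟨⟨x, hxN⟩, hxK⟩ with hx2
    have hZp : IsPGroup p (Subgroup.zpowers x2) := by
      obtain ⟨n, hn⟩ := hxpow
      exact isPGroup_zpowers (n := n) (by apply Subtype.ext; apply Subtype.ext; push_cast; exact hn)
    have hx2cent : x2 ∈ CC (S : Subgroup ↥Kn) := by
      rw [Subgroup.mem_centralizer_iff]
      intro h hh
      have hhP : ((h : ↥N) : Gbar) ∈ Pbar := ⟨h, ⟨h, hh, rfl⟩, rfl⟩
      have := Subgroup.mem_centralizer_iff.mp hxC _ hhP
      apply Subtype.ext; apply Subtype.ext; push_cast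
      exact this
    have hZN : Subgroup.zpowers x2 ≤ (Subgroup.normalizer ((S : Subgroup ↥Kn) : Set ↥Kn)) :=
      (Subgroup.zpowers_le.mpr hx2cent).trans (hCN (S : Subgroup ↥Kn))
    have hsupP : IsPGroup p ((Subgroup.zpowers x2 ⊔ (S : Subgroup ↥Kn) : Subgroup ↥Kn)) :=
      IsPGroup.to_sup_of_normal_right' hZp S.isPGroup' hZN
    have hZS := S.is_maximal' hsupP le_sup_right
    have hx2S : x2 ∈ (S : Subgroup ↥Kn) := by
      rw [← hZS]
      exact Subgroup.mem_sup_left (Subgroup.mem_zpowers x2)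
    exact ⟨⟨x, hxN⟩, ⟨x2, hx2S, rfl⟩, rfl⟩
  refine ⟨Pbar, hPbarP, hPbarC, ?_, hPbarG⟩
  -- Pbar is F_p(Gbar)-radical
  intro K' hK'N hK'P
  set M := (Subgroup.normalizer (Pbar : Set Gbar)) with hM
  set T := Pbar ⊔ Subgroup.centralizer (Pbar : Set Gbar) with hT
  have hMN : M ≤ N := by
    intro m hm
    rw [hN, Subgroup.mem_normalizer_iff]
    intro h
    rw [← hPbarG, Subgroup.mem_inf, Subgroup.mem_inf]
    constructor
    · rintro ⟨h1, h2⟩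
      exact ⟨(Subgroup.mem_normalizer_iff.mp hm h).mp h1, hG.conj_mem h h2 m⟩
    · rintro ⟨h1, h2⟩
      refine ⟨(Subgroup.mem_normalizer_iff.mp hm h).mpr h1, ?_⟩
      have h3 := hG.conj_mem _ h2 m⁻¹
      have h4 : m⁻¹ * (m * h * m⁻¹) * m⁻¹⁻¹ = h := by group
      rwa [h4] at h3
  have hCbarC : Subgroup.centralizer (Pbar : Set Gbar) ≤ CC P :=
    Subgroup.centralizer_le (fun z hz => hPle hz)
  have hTN : T ≤ N := sup_le hPbarN (hCbarC.trans (hCN P))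
  have hTM : T ≤ M := sup_le Subgroup.le_normalizer (hCN Pbar)
  have hTKn : ∀ z, z ∈ T → ∀ (hzN : z ∈ N), (⟨z, hzN⟩ : ↥N) ∈ Kn := by
    have hTle : T ≤ Kn.map N.subtype := by
      refine sup_le ?_ ?_
      · intro z hz
        exact ⟨⟨z, hPbarN hz⟩, hPnKn (hPbar_lift z hz _), rfl⟩
      · intro z hz
        have hzN : z ∈ N := (hCbarC.trans (hCN P)) hz
        exact ⟨⟨z, hzN⟩, hCnKn (by rw [Subgroup.mem_subgroupOf]; exact hCbarC hz), rfl⟩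
    intro z hz hzN
    obtain ⟨x1, hx1, hx1e⟩ := hTle hz
    have he : (⟨z, hzN⟩ : ↥N) = x1 := Subtype.ext hx1e.symm
    rw [he]; exact hx1
  have hTconj : ∀ g ∈ M, ∀ t ∈ T, g * t * g⁻¹ ∈ T := by
    intro g hg t ht
    have h1 : (⟨t, hTM ht⟩ : ↥M) ∈ outKer Pbar := by
      rw [outKer, Subgroup.mem_subgroupOf]; exact ht
    have h2 := (outKer_normal Pbar).conj_mem _ h1 ⟨g, hg⟩
    rw [outKer, Subgroup.mem_subgroupOf] at h2
    exact h2
  -- the preimage Q of K' in Gbar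
  set Q := (K'.comap (QuotientGroup.mk' (outKer Pbar))).map M.subtype with hQ
  have hQM : Q ≤ M := Subgroup.map_subtype_le _
  have hQT : T ≤ Q := by
    intro t ht
    refine ⟨⟨t, hTM ht⟩, ?_, rfl⟩
    change QuotientGroup.mk' (outKer Pbar) ⟨t, hTM ht⟩ ∈ K'
    have h1 : QuotientGroup.mk' (outKer Pbar) ⟨t, hTM ht⟩ = 1 :=
      (QuotientGroup.eq_one_iff _).mpr (by rw [outKer, Subgroup.mem_subgroupOf]; exact ht)
    rw [h1]; exact one_mem K'
  have hQconj : ∀ g ∈ M, ∀ q ∈ Q, g * q * g⁻¹ ∈ Q := by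
    rintro g hg _ ⟨q1, hq1, rfl⟩
    refine ⟨⟨g, hg⟩ * q1 * ⟨g, hg⟩⁻¹, ?_, rfl⟩
    change QuotientGroup.mk' (outKer Pbar) q1 ∈ K' at hq1
    change QuotientGroup.mk' (outKer Pbar) (⟨g, hg⟩ * q1 * ⟨g, hg⟩⁻¹) ∈ K'
    rw [map_mul, map_mul, map_inv]
    exact hK'N.conj_mem _ hq1 _
  have hQpow : ∀ q ∈ Q, ∃ n : ℕ, q ^ p ^ n ∈ T := by
    rintro _ ⟨q1, hq1, rfl⟩
    change QuotientGroup.mk' (outKer Pbar) q1 ∈ K' at hq1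
    obtain ⟨n, hn⟩ := forall_of_isPGroup hK'P _ hq1
    have hn' : (QuotientGroup.mk' (outKer Pbar)) (q1 ^ p ^ n) = 1 := by
      rw [map_pow]; exact hn
    have h1 := (QuotientGroup.eq_one_iff _).mp hn'
    rw [outKer, Subgroup.mem_subgroupOf] at h1
    exact ⟨n, by push_cast at h1 ⊢; exact h1⟩
  -- pass to the quotient W
  set imQ := (Q.subgroupOf N).map π with himQ
  set L := Kb ⊔ imQ with hL
  have hQKb : ∀ x : ↥N, (x : Gbar) ∈ Q → ∃ n : ℕ, (π x) ^ p ^ n ∈ Kb := by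
    intro x hx
    obtain ⟨n, hn⟩ := hQpow _ hx
    refine ⟨n, ?_⟩
    rw [← map_pow]
    have hxT : ((x ^ p ^ n : ↥N) : Gbar) ∈ T := by push_cast; exact hn
    have h1 := hTKn _ hxT (x ^ p ^ n).2
    have he : (⟨((x ^ p ^ n : ↥N) : Gbar), (x ^ p ^ n).2⟩ : ↥N) = x ^ p ^ n :=
      Subtype.ext rfl
    rw [he] at h1
    exact Subgroup.mem_comap.mp h1
  have hLker : ∀ w ∈ L, ∃ n : ℕ, w ^ p ^ n ∈ Kb := by
    intro w hw
    haveI := hKbN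
    set σ := QuotientGroup.mk' Kb with hσ
    have h1 : σ w ∈ L.map σ := Subgroup.mem_map_of_mem σ hw
    have h2 : L.map σ = imQ.map σ := by
      rw [hL, Subgroup.map_sup]
      have hb : Kb.map σ = ⊥ := by
        rw [eq_bot_iff]; rintro _ ⟨b, hb', rfl⟩
        simp only [SetLike.mem_coe, Subgroup.mem_bot]
        exact (QuotientGroup.eq_one_iff b).mpr hb'
      rw [hb, bot_sup_eq]
    rw [h2] at h1
    obtain ⟨i, hi, hie⟩ := h1
    obtain ⟨x, hx, hxe⟩ := hi
    rw [SetLike.mem_coe, Subgroup.mem_subgroupOf] at hx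
    obtain ⟨n, hn⟩ := hQKb x hx
    refine ⟨n, ?_⟩
    have h3 : (σ w) ^ p ^ n = 1 := by
      rw [← hie, ← hxe, ← map_pow, ← map_pow]
      exact (QuotientGroup.eq_one_iff _).mpr hn
    rw [← map_pow] at h3
    exact (QuotientGroup.eq_one_iff _).mp h3
  -- Frattini argument
  haveI := hKnN
  have htop := Sylow.normalizer_sup_eq_top (p := p) (N := Kn) S
  rw [← hPnDef] at htop
  have hMnorm : ∀ h : ↥N, h ∈ (Subgroup.normalizer (Pn : Set ↥N)) ↔ (h : Gbar) ∈ M := by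
    have hPnEq : Pn = Pbar.subgroupOf N := by
      apply Subgroup.map_injective (Subgroup.subtype_injective N)
      rw [Subgroup.subgroupOf_map_subtype, inf_of_le_left hPbarN]
    intro h
    rw [hPnEq]
    exact normalizer_transfer N Pbar hPbarN h
  have hLnormal : L.Normal := by
    have hconjL : ∀ w : ↥N ⧸ Dn G P, ∀ l ∈ L, w * l * w⁻¹ ∈ L := by
      intro w l hl
      obtain ⟨nn, rfl⟩ := QuotientGroup.mk'_surjective (Dn G P) w
      have hnn : nn ∈ (↑((Subgroup.normalizer (Pn : Set ↥N)) ⊔ Kn) : Set ↥N) := by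
        rw [htop]; trivial
      rw [Subgroup.mul_normal] at hnn
      obtain ⟨h, hh, k, hk, rfl⟩ := hnn
      have hπk : π k ∈ Kb := Subgroup.mem_comap.mp hk
      have inner : π k * l * (π k)⁻¹ ∈ L :=
        mul_mem (mul_mem (Subgroup.mem_sup_left hπk) hl)
          (inv_mem (Subgroup.mem_sup_left hπk))
      have outer : ∀ l' ∈ L, π h * l' * (π h)⁻¹ ∈ L := by
        intro l' hl'
        have hmap : L.map (MulAut.conj (π h)).toMonoidHom ≤ L := by
          rw [hL, Subgroup.map_sup]
          refine sup_le ?_ ?_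
          · rintro _ ⟨b, hb, rfl⟩
            exact Subgroup.mem_sup_left (by simpa using hKbN.conj_mem b hb (π h))
          · rintro _ ⟨i, hi, rfl⟩
            obtain ⟨x, hx, rfl⟩ := hi
            rw [SetLike.mem_coe, Subgroup.mem_subgroupOf] at hx
            have hq' : ((h * x * h⁻¹ : ↥N) : Gbar) ∈ Q := by
              push_cast
              exact hQconj _ ((hMnorm h).mp hh) _ hx
            have he : (MulAut.conj (π h)).toMonoidHom (π x) = π (h * x * h⁻¹) := by
              simp [MulAut.conj_apply]
            rw [he]
            exact Subgroup.mem_sup_right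
              (Subgroup.mem_map_of_mem π (Subgroup.mem_subgroupOf.mpr hq'))
        have := hmap (Subgroup.mem_map_of_mem _ hl')
        simpa using this
      have hfinal := outer _ inner
      have he : π h * (π k * l * (π k)⁻¹) * (π h)⁻¹ = π (h * k) * l * (π (h * k))⁻¹ := by
        rw [map_mul]; group
      rwa [he] at hfinal
    exact ⟨fun n hn g => hconjL g n hn⟩
  have hLp : IsPGroup p L := by
    apply isPGroup_of_forall
    intro w hw
    obtain ⟨n, hn⟩ := hLker w hw
    obtain ⟨m', hm'⟩ := forall_of_isPGroup hKbP _ hn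
    exact ⟨n + m', by rw [pow_add, pow_mul]; exact hm'⟩
  have hLeq := hKbmax L hLnormal hLp le_sup_left
  have himQKb : imQ ≤ Kb := by rw [← hLeq]; exact le_sup_right
  -- now the element-wise argument
  rw [eq_bot_iff]
  intro q hq
  revert hq
  induction q using QuotientGroup.induction_on with
  | _ m =>
    intro hq
    change (QuotientGroup.mk m : ↥(Subgroup.normalizer (Pbar : Set Gbar)) ⧸ outKer Pbar) = 1
    have hmQ : (m : Gbar) ∈ Q :=
      ⟨m, by change QuotientGroup.mk' (outKer Pbar) m ∈ K'; exact hq, rfl⟩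
    have hmN : (m : Gbar) ∈ N := hMN m.2
    have hmKn : (⟨(m : Gbar), hmN⟩ : ↥N) ∈ Kn := by
      have h1 : π ⟨(m : Gbar), hmN⟩ ∈ imQ :=
        Subgroup.mem_map_of_mem π (Subgroup.mem_subgroupOf.mpr hmQ)
      exact Subgroup.mem_comap.mpr (himQKb h1)
    -- Stage 2 : inside Kn
    set φ := N.subtype.comp Kn.subtype with hφ
    set XK := Q.comap φ with hXK
    set TK := T.comap φ with hTKdef
    have hTKXK : TK ≤ XK := Subgroup.comap_mono hQT
    have hSTK : (S : Subgroup ↥Kn) ≤ TK := by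
      intro s hs
      rw [Subgroup.mem_comap]
      have h1 : φ s ∈ Pbar := ⟨(s : ↥N), ⟨s, hs, rfl⟩, rfl⟩
      exact Subgroup.mem_sup_left h1
    haveI hTKnormal : ((TK.subgroupOf XK)).Normal := by
      constructor
      intro t ht g
      rw [Subgroup.mem_subgroupOf] at ht ⊢
      rw [hTKdef, Subgroup.mem_comap] at ht ⊢
      have hgQ : φ (g : ↥Kn) ∈ Q := Subgroup.mem_comap.mp g.2
      have hc1 : ((↑(g * t * g⁻¹) : ↥Kn)) = ↑g * ↑t * (↑g)⁻¹ := rfl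
      rw [hc1, map_mul, map_mul, map_inv]
      exact hTconj _ (hQM hgQ) _ ht
    have hXKpow : ∀ x : ↥XK, ∃ n : ℕ, (x : ↥Kn) ^ p ^ n ∈ TK := by
      intro x
      have hxQ : φ (x : ↥Kn) ∈ Q := Subgroup.mem_comap.mp x.2
      obtain ⟨n, hn⟩ := hQpow _ hxQ
      exact ⟨n, by rw [Subgroup.mem_comap, map_pow]; exact hn⟩
    have hVp : IsPGroup p (↥XK ⧸ TK.subgroupOf XK) := by
      apply isPGroup_quot
      intro x
      obtain ⟨n, hn⟩ := hXKpow x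
      exact ⟨n, by rw [Subgroup.mem_subgroupOf]; push_cast; exact hn⟩
    obtain ⟨k', hk'⟩ := IsPGroup.iff_card.mp hVp
    have hS'p : IsPGroup p ((S : Subgroup ↥Kn).subgroupOf XK) := by
      apply isPGroup_of_forall
      intro y hy
      rw [Subgroup.mem_subgroupOf] at hy
      obtain ⟨n, hn⟩ := forall_of_isPGroup S.isPGroup' _ hy
      exact ⟨n, by apply Subtype.ext; push_cast; exact hn⟩
    obtain ⟨R, hSR⟩ := hS'p.exists_le_sylow
    have hRmap : ((R : Subgroup ↥XK).map XK.subtype) = (S : Subgroup ↥Kn) := by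
      apply S.is_maximal' (R.isPGroup'.map _)
      intro s hs
      have hsX : s ∈ XK := hTKXK (hSTK hs)
      exact ⟨⟨s, hsX⟩, hSR (by rw [Subgroup.mem_subgroupOf]; exact hs), rfl⟩
    have hRT : (R : Subgroup ↥XK) ≤ TK.subgroupOf XK := by
      intro r hr
      rw [Subgroup.mem_subgroupOf]
      have h1 : (r : ↥Kn) ∈ (S : Subgroup ↥Kn) := by
        rw [← hRmap]; exact ⟨r, hr, rfl⟩
      exact hSTK h1
    have hidx1 : (TK.subgroupOf XK).index = 1 := by
      have hd1 : (TK.subgroupOf XK).index ∣ (R : Subgroup ↥XK).index :=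
        Subgroup.index_dvd_of_le hRT
      have hnd : ¬ p ∣ (R : Subgroup ↥XK).index := R.not_dvd_index
      have hcard : (TK.subgroupOf XK).index = p ^ k' := by
        rw [Subgroup.index_eq_card]; exact hk'
      rcases Nat.eq_zero_or_pos k' with h0 | hpos
      · rw [hcard, h0, pow_zero]
      · exfalso
        exact hnd (dvd_trans (hcard ▸ dvd_pow_self p hpos.ne') hd1)
    have hTKtop : TK.subgroupOf XK = ⊤ := Subgroup.index_eq_one.mp hidx1
    have hmXK : (⟨⟨(m : Gbar), hmN⟩, hmKn⟩ : ↥Kn) ∈ XK := by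
      rw [hXK, Subgroup.mem_comap]; exact hmQ
    have hmTK : (⟨⟨(m : Gbar), hmN⟩, hmKn⟩ : ↥Kn) ∈ TK := by
      have h1 := Subgroup.mem_top (⟨_, hmXK⟩ : ↥XK)
      rw [← hTKtop, Subgroup.mem_subgroupOf] at h1
      exact h1
    have hmT : (m : Gbar) ∈ T := Subgroup.mem_comap.mp hmTK
    exact (QuotientGroup.eq_one_iff m).mpr (by rw [outKer, Subgroup.mem_subgroupOf]; exact hmT)
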